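/- arXiv:math/9904061 — 2 statements merged into one kernel-verified Lean document; each statement's English description precedes it below -/
import Mathlib

section
/- Terminating Saalschütz-type evaluation used in Slater's proof: Let a, b be complex numbers and N a nonnegative integer such that no denominator factor vanishes (in particular (1+a−b)_k, (1/2+a/2)_k are nonzero for 0 ≤ k ≤ N and (1/2 − a/2 − N)_N ≠ 0). Then ∑_{k=0}^{N} (1/2 + a/2 − b)_k (a+N)_k (−N)_k / ((1+a−b)_k (1/2 + a/2)_k k!) = (1/2 + a/2)_N (1 − b − N)_N / ((1+a−b)_N (1/2 − a/2 − N)_N). -/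
open Complex Finset Filter Topology Polynomial

/-- The Pochhammer symbol `(x)_k = x (x+1) ⋯ (x+k-1)`. -/
noncomputable def poch (x : ℂ) (k : ℕ) : ℂ := (ascPochhammer ℂ k).eval x

lemma poch_zero (x : ℂ) : poch x 0 = 1 := by simp [poch]

lemma poch_add (x : ℂ) (n m : ℕ) : poch x (n + m) = poch x n * poch (x + n) m := by
  unfold poch
  rw [← ascPochhammer_mul, eval_mul, eval_comp]
  simp

lemma poch_succ (x : ℂ) (n : ℕ) : poch x (n + 1) = poch x n * (x + n) := by
  rw [poch_add]
  simp [poch, ascPochhammer_one]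

lemma poch_neg_nat (N k : ℕ) : poch (-(N : ℂ)) k = (-1) ^ k * (k.factorial * N.choose k) := by
  rw [poch, ascPochhammer_eval_neg_eq_descPochhammer, descPochhammer_eval_eq_descFactorial,
    Nat.descFactorial_eq_factorial_mul_choose]
  push_cast
  ring

lemma poch_reflect (c : ℂ) (N : ℕ) : ∀ k, k ≤ N →
    poch c N = poch c (N - k) * ((-1) ^ k * poch (1 - c - N) k) := by
  intro k
  induction k with
  | zero => simp [poch_zero]
  | succ k ih =>
    intro hk
    have hk' : k ≤ N := Nat.le_of_succ_le hk
    have h1 : N - k = (N - (k + 1)) + 1 := by omega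
    have h2 : poch c (N - k) = poch c (N - (k + 1)) * (c + (N - (k+1) : ℕ)) := by
      rw [h1, poch_succ]
    have h3 : ((N - (k+1) : ℕ) : ℂ) = (N : ℂ) - (k + 1) := by
      rw [Nat.cast_sub hk]
      push_cast
      ring
    rw [ih hk', h2, h3, poch_succ]
    ring

lemma poch_vandermonde (p q : ℂ) : ∀ m : ℕ,
    poch (p + q) m = ∑ i ∈ range (m + 1), (m.choose i : ℂ) * (poch p i * poch q (m - i)) := by
  intro m
  induction m with
  | zero => simp [poch_zero]
  | succ m ih =>
    rw [poch_succ, ih, sum_mul]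
    have key : ∀ i ∈ range (m + 1),
        (m.choose i : ℂ) * (poch p i * poch q (m - i)) * (p + q + m)
        = (m.choose i : ℂ) * (poch p (i + 1) * poch q (m - i))
          + (m.choose i : ℂ) * (poch p i * poch q (m + 1 - i)) := by
      intro i hi
      have hi' : i ≤ m := Nat.lt_succ_iff.mp (mem_range.mp hi)
      have h2 : poch q (m + 1 - i) = poch q (m - i) * (q + ((m - i : ℕ) : ℂ)) := by
        rw [show m + 1 - i = (m - i) + 1 from by omega, poch_succ]
      have hc : ((m - i : ℕ) : ℂ) = (m : ℂ) - i := by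
        rw [Nat.cast_sub hi']
      rw [poch_succ, h2, hc]
      ring
    rw [sum_congr rfl key, sum_add_distrib]
    -- RHS: peel the first term
    rw [sum_range_succ' (fun i => (((m+1).choose i : ℂ)) * (poch p i * poch q (m + 1 - i))) (m+1)]
    simp only [Nat.choose_succ_succ, Nat.succ_sub_succ, Nat.choose_zero_right, Nat.cast_add,
      Nat.cast_one, poch_zero, Nat.sub_zero, Nat.succ_eq_add_one, one_mul]
    have expand : ∑ x ∈ range (m+1), ((m.choose x : ℂ) + (m.choose (x+1) : ℂ)) *
          (poch p (x+1) * poch q (m - x))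
        = (∑ x ∈ range (m+1), (m.choose x : ℂ) * (poch p (x+1) * poch q (m - x)))
          + ∑ x ∈ range (m+1), (m.choose (x+1) : ℂ) * (poch p (x+1) * poch q (m - x)) := by
      rw [← sum_add_distrib]
      exact sum_congr rfl fun i _ => by ring
    rw [expand, add_assoc]
    congr 1
    rw [sum_range_succ (fun i => (m.choose (i+1) : ℂ) * (poch p (i+1) * poch q (m - i))) m]
    simp only [Nat.choose_succ_self, Nat.cast_zero, zero_mul, add_zero]
    rw [sum_range_succ' (fun i => ((m.choose i : ℂ)) * (poch p i * poch q (m + 1 - i))) m]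
    simp only [Nat.choose_zero_right, Nat.cast_one, poch_zero, Nat.sub_zero, Nat.succ_sub_succ,
      one_mul, Nat.succ_eq_add_one]

lemma choose_trinomial (N k j : ℕ) (hk : k ≤ N) (hj : j ≤ N) :
    N.choose k * (N - k).choose j = N.choose j * (N - j).choose k := by
  by_cases h : k + j ≤ N
  · have e1 := Nat.choose_mul (n := N) (k := k + j) (s := k) (Nat.le_add_right _ _)
    have e2 := Nat.choose_mul (n := N) (k := k + j) (s := j) (Nat.le_add_left _ _)
    rw [Nat.add_sub_cancel_left] at e1
    rw [Nat.add_sub_cancel] at e2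
    rw [← e1, ← e2, Nat.choose_symm_add]
  · rw [Nat.choose_eq_zero_of_lt (by omega : N - k < j),
      Nat.choose_eq_zero_of_lt (by omega : N - j < k), Nat.mul_zero, Nat.mul_zero]

lemma saal_star (x y z : ℂ) (N : ℕ) :
    ∑ k ∈ range (N + 1), (N.choose k : ℂ) * poch x k * poch y k
        * poch (z - x - y) (N - k) * poch (z + k) (N - k)
      = poch (z - x) N * poch (z - y) N := by
  set c : ℂ := z - x - y with hc
  -- Step 1: expand poch (z+k) (N-k) by Vandermonde, padded to range (N+1)
  have step1 : ∀ k ∈ range (N + 1),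
      (N.choose k : ℂ) * poch x k * poch y k * poch c (N - k) * poch (z + k) (N - k)
      = ∑ j ∈ range (N + 1), (N.choose k : ℂ) * ((N - k).choose j : ℂ) *
          (poch x k * poch y k * poch c (N - k) * poch (z - x) j * poch (x + k) (N - k - j)) := by
    intro k hk
    have hkN : k ≤ N := Nat.lt_succ_iff.mp (mem_range.mp hk)
    have hv : poch (z + k) (N - k) = ∑ j ∈ range (N - k + 1),
        ((N - k).choose j : ℂ) * (poch (z - x) j * poch (x + k) (N - k - j)) := by
      have h := poch_vandermonde (z - x) (x + k) (N - k)
      rw [show z - x + (x + (k : ℂ)) = z + k from by ring] at h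
      exact h
    have hpad : ∑ j ∈ range (N - k + 1),
          ((N - k).choose j : ℂ) * (poch (z - x) j * poch (x + k) (N - k - j))
        = ∑ j ∈ range (N + 1),
          ((N - k).choose j : ℂ) * (poch (z - x) j * poch (x + k) (N - k - j)) := by
      apply sum_subset (range_subset_range.mpr (by omega))
      intro j _ hj
      rw [Nat.choose_eq_zero_of_lt (by simp at hj ⊢; omega), Nat.cast_zero, zero_mul]
    rw [hv, hpad, mul_sum]
    exact sum_congr rfl fun j _ => by ring
  rw [sum_congr rfl step1]
  -- Step 2: pointwise symmetrization
  have step2 : ∀ k ∈ range (N + 1), ∀ j ∈ range (N + 1),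
      (N.choose k : ℂ) * ((N - k).choose j : ℂ) *
        (poch x k * poch y k * poch c (N - k) * poch (z - x) j * poch (x + k) (N - k - j))
      = (N.choose j : ℂ) * ((N - j).choose k : ℂ) *
        (poch (z - x) j * poch c j * poch x (N - j) * poch y k * poch (c + j) (N - j - k)) := by
    intro k hk j hj
    have hkN : k ≤ N := Nat.lt_succ_iff.mp (mem_range.mp hk)
    have hjN : j ≤ N := Nat.lt_succ_iff.mp (mem_range.mp hj)
    by_cases hkj : k + j ≤ N
    · have tri : ((N.choose k * (N - k).choose j : ℕ) : ℂ)
          = ((N.choose j * (N - j).choose k : ℕ) : ℂ) := by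
        rw [choose_trinomial N k j hkN hjN]
      push_cast at tri
      have e1 : poch x (N - j) = poch x k * poch (x + k) (N - k - j) := by
        rw [show N - j = k + (N - k - j) from by omega, poch_add]
      have e2 : poch c (N - k) = poch c j * poch (c + j) (N - j - k) := by
        rw [show N - k = j + (N - j - k) from by omega, poch_add]
      rw [e1, e2]
      linear_combination (poch x k * poch (x + k) (N - k - j) * poch y k * poch c j *
        poch (c + j) (N - j - k) * poch (z - x) j) * tri
    · rw [Nat.choose_eq_zero_of_lt (by omega : N - k < j),
        Nat.choose_eq_zero_of_lt (by omega : N - j < k)]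
      push_cast
      ring
  rw [sum_congr rfl (fun k hk => sum_congr rfl (step2 k hk))]
  rw [sum_comm]
  -- Step 3: inner Vandermonde over k
  have step3 : ∀ j ∈ range (N + 1),
      ∑ k ∈ range (N + 1), (N.choose j : ℂ) * ((N - j).choose k : ℂ) *
        (poch (z - x) j * poch c j * poch x (N - j) * poch y k * poch (c + j) (N - j - k))
      = (N.choose j : ℂ) * poch c j * poch x (N - j) * poch (z - x) N := by
    intro j hj
    have hjN : j ≤ N := Nat.lt_succ_iff.mp (mem_range.mp hj)
    have factored : ∑ k ∈ range (N + 1), (N.choose j : ℂ) * ((N - j).choose k : ℂ) *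
          (poch (z - x) j * poch c j * poch x (N - j) * poch y k * poch (c + j) (N - j - k))
        = ((N.choose j : ℂ) * poch (z - x) j * poch c j * poch x (N - j)) *
          ∑ k ∈ range (N + 1), ((N - j).choose k : ℂ) * (poch y k * poch (c + j) (N - j - k)) := by
      rw [mul_sum]
      exact sum_congr rfl fun k _ => by ring
    have hshrink : ∑ k ∈ range (N + 1), ((N - j).choose k : ℂ) *
          (poch y k * poch (c + j) (N - j - k))
        = ∑ k ∈ range (N - j + 1), ((N - j).choose k : ℂ) *
          (poch y k * poch (c + j) (N - j - k)) := by
      symm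
      apply sum_subset (range_subset_range.mpr (by omega))
      intro k _ hk
      rw [Nat.choose_eq_zero_of_lt (by simp at hk ⊢; omega), Nat.cast_zero, zero_mul]
    have hv : ∑ k ∈ range (N - j + 1), ((N - j).choose k : ℂ) *
          (poch y k * poch (c + j) (N - j - k)) = poch (z - x + j) (N - j) := by
      have h := (poch_vandermonde y (c + j) (N - j)).symm
      rw [show y + (c + (j : ℂ)) = z - x + j from by rw [hc]; ring] at h
      exact h
    rw [factored, hshrink, hv]
    have e : poch (z - x) N = poch (z - x) j * poch (z - x + j) (N - j) := by
      rw [show N = j + (N - j) from by omega, poch_add]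
      rw [show j + (N - j) - j = N - j from by omega]
    rw [e]
    ring
  rw [sum_congr rfl step3]
  -- Step 4: final Vandermonde over j
  have factored : ∑ j ∈ range (N + 1),
        (N.choose j : ℂ) * poch c j * poch x (N - j) * poch (z - x) N
      = poch (z - x) N * ∑ j ∈ range (N + 1), (N.choose j : ℂ) * (poch c j * poch x (N - j)) := by
    rw [mul_sum]
    exact sum_congr rfl fun j _ => by ring
  rw [factored, ← poch_vandermonde c x N, show c + x = z - y from by rw [hc]; ring]

lemma poch_split (x : ℂ) {k N : ℕ} (h : k ≤ N) :
    poch x N = poch x k * poch (x + k) (N - k) := by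
  conv_lhs => rw [show N = k + (N - k) from by omega]
  rw [poch_add]

/-- Terminating Saalschütz-type evaluation:
`∑_{k=0}^N (1/2+a/2-b)_k (a+N)_k (-N)_k / ((1+a-b)_k (1/2+a/2)_k k!)
  = (1/2+a/2)_N (1-b-N)_N / ((1+a-b)_N (1/2-a/2-N)_N)`. -/
theorem saalschutz_evaluation (a b : ℂ) (N : ℕ)
    (h1 : ∀ k : ℕ, k ≤ N → poch (1 + a - b) k ≠ 0)
    (h2 : ∀ k : ℕ, k ≤ N → poch (1 / 2 + a / 2) k ≠ 0)
    (h3 : poch (1 / 2 - a / 2 - N) N ≠ 0) :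
    ∑ k ∈ range (N + 1),
        poch (1 / 2 + a / 2 - b) k * poch (a + N) k * poch (-(N : ℂ)) k /
          (poch (1 + a - b) k * poch (1 / 2 + a / 2) k * (Nat.factorial k : ℂ))
      = poch (1 / 2 + a / 2) N * poch (1 - b - N) N /
        (poch (1 + a - b) N * poch (1 / 2 - a / 2 - N) N) := by
  have hzN : poch (1 + a - b) N ≠ 0 := h1 N le_rfl
  have key : ∀ k ∈ range (N + 1),
      poch (1 / 2 + a / 2 - b) k * poch (a + N) k * poch (-(N : ℂ)) k /
          (poch (1 + a - b) k * poch (1 / 2 + a / 2) k * (Nat.factorial k : ℂ))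
      = (N.choose k : ℂ) * poch (1 / 2 + a / 2 - b) k * poch (a + N) k *
          poch (1 / 2 - a / 2 - N) (N - k) * poch (1 + a - b + k) (N - k) /
        (poch (1 + a - b) N * poch (1 / 2 - a / 2 - N) N) := by
    intro k hk
    have hkN : k ≤ N := Nat.lt_succ_iff.mp (mem_range.mp hk)
    have hne1 : poch (1 + a - b) k * poch (1 / 2 + a / 2) k * (Nat.factorial k : ℂ) ≠ 0 :=
      mul_ne_zero (mul_ne_zero (h1 k hkN) (h2 k hkN))
        (Nat.cast_ne_zero.mpr (Nat.factorial_ne_zero k))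
    have hne2 : poch (1 + a - b) N * poch (1 / 2 - a / 2 - N) N ≠ 0 := mul_ne_zero hzN h3
    rw [div_eq_div_iff hne1 hne2, poch_neg_nat]
    have ez : poch (1 + a - b) N = poch (1 + a - b) k * poch (1 + a - b + k) (N - k) :=
      poch_split _ hkN
    have ec : poch (1 / 2 - a / 2 - N) N
        = poch (1 / 2 - a / 2 - N) (N - k) * ((-1) ^ k * poch (1 / 2 + a / 2) k) := by
      have h := poch_reflect (1 / 2 - a / 2 - N) N k hkN
      rw [show (1 : ℂ) - (1 / 2 - a / 2 - N) - N = 1 / 2 + a / 2 from by ring] at h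
      exact h
    rw [ez, ec]
    have hs : ((-1 : ℂ)) ^ k * (-1) ^ k = 1 := by
      rw [← pow_add, Even.neg_one_pow ⟨k, rfl⟩]
    linear_combination (poch (1 / 2 + a / 2 - b) k * poch (a + N) k * (Nat.factorial k : ℂ) *
      (N.choose k : ℂ) * poch (1 + a - b) k * poch (1 + a - b + k) (N - k) *
      poch (1 / 2 - a / 2 - N) (N - k) * poch (1 / 2 + a / 2) k) * hs
  rw [sum_congr rfl key, ← sum_div]
  have hstar := saal_star (1 / 2 + a / 2 - b) (a + N) (1 + a - b) N
  rw [show (1 + a - b) - (1 / 2 + a / 2 - b) - (a + (N : ℂ)) = 1 / 2 - a / 2 - N from by ring,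
    show (1 + a - b) - (1 / 2 + a / 2 - b) = 1 / 2 + a / 2 from by ring,
    show (1 + a - b) - (a + (N : ℂ)) = 1 - b - N from by ring] at hstar
  rw [hstar]
end

section
/- Asymptotics of the WZ summand in k: Let a, b be complex numbers with Re(b) < 1, and let F(n,k) be as in the WZ-pair for Kummer's theorem (with the same nonvanishing hypotheses). Then for each fixed nonnegative integer n, |F(n,k)| is asymptotic to a constant times k^{2Re(b)−2} as k → ∞; in particular F(n,k) → 0 as k → ∞. -/
open Complex Finset Filter Topology

/-- The WZ summand for Kummer's theorem:
`F(n,k) = (a+2n)_k (b)_k (-1)^k / ((1+a+2n-b)_k k!) ·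
  Γ(1+a+2n) Γ(1+a/2+n-b) / (Γ(1+a/2+n) Γ(1+a+2n-b))`. -/
noncomputable def kummerF (a b : ℂ) (n k : ℕ) : ℂ :=
  poch (a + 2 * n) k * poch b k * (-1 : ℂ) ^ k /
    (poch (1 + a + 2 * n - b) k * (Nat.factorial k : ℂ)) *
  (Gamma (1 + a + 2 * n) * Gamma (1 + a / 2 + n - b) /
    (Gamma (1 + a / 2 + n) * Gamma (1 + a + 2 * n - b)))

/-- The WZ certificate `C(n,k) = -(b-1)k / ((1+a+2n-b+k)(a+2n))`. -/
noncomputable def kummerC (a b : ℂ) (n k : ℕ) : ℂ :=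
  -((b - 1) * k) / ((1 + a + 2 * n - b + k) * (a + 2 * n))

/-- `G(n,k) = F(n,k) · C(n,k)`. -/
noncomputable def kummerG (a b : ℂ) (n k : ℕ) : ℂ :=
  kummerF a b n k * kummerC a b n k

lemma poch_eq_prod (x : ℂ) (k : ℕ) : poch x k = ∏ j ∈ Finset.range k, (x + j) := by
  induction k with
  | zero => simp [poch]
  | succ k ih =>
    rw [poch, ascPochhammer_succ_eval]
    rw [poch] at ih
    rw [ih, Finset.prod_range_succ]

lemma poch_ne_zero {x : ℂ} (hx : ∀ j : ℕ, x + j ≠ 0) (k : ℕ) : poch x k ≠ 0 := by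
  rw [poch_eq_prod]; exact Finset.prod_ne_zero_iff.mpr fun j _ => hx j

lemma gammaSeq_key {x : ℂ} (hx : ∀ j : ℕ, x + j ≠ 0) {k : ℕ} (hk : k ≠ 0) :
    Complex.GammaSeq x k ≠ 0 ∧
    Complex.GammaSeq x k * (poch x k * (x + k)) = (k:ℂ)^x * (k.factorial : ℂ) := by
  have hden : poch x k * (x+k) ≠ 0 := mul_ne_zero (poch_ne_zero hx k) (hx k)
  have hnum : (k:ℂ)^x * (k.factorial : ℂ) ≠ 0 :=
    mul_ne_zero (by simp [Complex.cpow_eq_zero_iff, hk]) (by exact_mod_cast k.factorial_ne_zero)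
  have hprod : (∏ j ∈ Finset.range (k+1), (x + j)) = poch x k * (x + k) := by
    rw [Finset.prod_range_succ, ← poch_eq_prod]
  have hseq : Complex.GammaSeq x k = (k:ℂ)^x * k.factorial / (poch x k * (x+k)) := by
    rw [Complex.GammaSeq, hprod]
  have hS : Complex.GammaSeq x k ≠ 0 := by rw [hseq]; exact div_ne_zero hnum hden
  exact ⟨hS, by rw [hseq, div_mul_cancel₀ _ hden]⟩

/-- Asymptotics of the WZ summand in `k`: for `Re b < 1`, for each fixed `n`,
`|F(n,k)|` is asymptotic to a positive constant times `k^{2 Re b - 2}` as `k → ∞`;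
in particular `F(n,k) → 0`. -/
theorem kummer_WZ_summand_asymptotics (a b : ℂ) (hb : b.re < 1)
    (hbn : ∀ m : ℕ, b ≠ -(m : ℂ))
    (h0 : ∀ n : ℕ, a + 2 * (n : ℂ) ≠ 0)
    (h1 : ∀ n k : ℕ, 1 + a + 2 * (n : ℂ) - b + (k : ℂ) ≠ 0)
    (h2 : ∀ n m : ℕ, 1 + a + 2 * (n : ℂ) - b ≠ -(m : ℂ))
    (h3 : ∀ n : ℕ, Gamma (1 + a + 2 * (n : ℂ)) ≠ 0)
    (h4 : ∀ n : ℕ, Gamma (1 + a / 2 + (n : ℂ) - b) ≠ 0)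
    (h5 : ∀ n : ℕ, Gamma (1 + a / 2 + (n : ℂ)) ≠ 0)
    (h6 : ∀ n : ℕ, Gamma (1 + a + 2 * (n : ℂ) - b) ≠ 0) :
    ∀ n : ℕ,
      (∃ c : ℝ, 0 < c ∧
        Asymptotics.IsEquivalent atTop
          (fun k : ℕ => ‖kummerF a b n k‖)
          (fun k : ℕ => c * (k : ℝ) ^ (2 * b.re - 2))) ∧
      Tendsto (fun k : ℕ => kummerF a b n k) atTop (𝓝 0) := by
  intro n
  set A : ℂ := a + 2 * (n : ℂ) with hA
  set A' : ℂ := 1 + a + 2 * (n : ℂ) - b with hA'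
  have pA : ∀ j : ℕ, A + j ≠ 0 := by
    intro j
    match j with
    | 0 => simpa using h0 n
    | (m+1) =>
      intro hcon
      apply h3 n
      rw [Complex.Gamma_eq_zero_iff]
      exact ⟨m, by push_cast at hcon ⊢; linear_combination hcon⟩
  have pb : ∀ j : ℕ, b + j ≠ 0 := fun j hcon => hbn j (by linear_combination hcon)
  have pA' : ∀ j : ℕ, A' + j ≠ 0 := fun j => h1 n j
  have p1 : ∀ j : ℕ, (1:ℂ) + j ≠ 0 := by
    intro j
    rw [add_comm]
    exact Nat.cast_add_one_ne_zero j
  have GA : Complex.Gamma A ≠ 0 :=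
    Complex.Gamma_ne_zero fun m hm => pA m (by rw [hm]; ring)
  have Gb : Complex.Gamma b ≠ 0 := Complex.Gamma_ne_zero fun m => hbn m
  have GA' : Complex.Gamma A' ≠ 0 := h6 n
  clear_value A A'
  set Cst : ℂ := Gamma (1 + a + 2 * (n:ℂ)) * Gamma (1 + a / 2 + n - b) /
      (Gamma (1 + a / 2 + n) * Gamma (1 + a + 2 * (n:ℂ) - b)) with hCstdef
  have hCst : Cst ≠ 0 := div_ne_zero (mul_ne_zero (h3 n) (h4 n)) (mul_ne_zero (h5 n) (h6 n))
  clear_value Cst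
  set g : ℕ → ℂ := fun k =>
    (GammaSeq A' k * GammaSeq 1 k * ((A' + k) * ((1:ℂ) + k))) /
      (GammaSeq A k * GammaSeq b k * ((A + k) * (b + k))) with hgdef
  set L : ℂ := Gamma A' * Gamma 1 / (Gamma A * Gamma b) with hLdef
  have hLne : L ≠ 0 := by
    rw [hLdef, Complex.Gamma_one]
    exact div_ne_zero (by simpa using GA') (mul_ne_zero GA Gb)
  -- limits
  have hinv : Tendsto (fun k : ℕ => ((k:ℂ))⁻¹) atTop (𝓝 0) := by
    have h1' : Tendsto (fun k : ℕ => ((k:ℝ))⁻¹) atTop (𝓝 0) :=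
      tendsto_inv_atTop_zero.comp tendsto_natCast_atTop_atTop
    have h2' := (Complex.continuous_ofReal.tendsto 0).comp h1'
    rw [Complex.ofReal_zero] at h2'
    apply h2'.congr
    intro k
    simp [Function.comp]
  have hratio : ∀ x y : ℂ, (∀ j : ℕ, y + j ≠ 0) →
      Tendsto (fun k : ℕ => (x + k) / (y + k)) atTop (𝓝 1) := by
    intro x y hy
    have h1' : Tendsto (fun k : ℕ => x * (k:ℂ)⁻¹ + 1) atTop (𝓝 1) := by
      simpa using ((hinv.const_mul x).add (tendsto_const_nhds (x := (1:ℂ))))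
    have h2' : Tendsto (fun k : ℕ => y * (k:ℂ)⁻¹ + 1) atTop (𝓝 1) := by
      simpa using ((hinv.const_mul y).add (tendsto_const_nhds (x := (1:ℂ))))
    have hlim : Tendsto (fun k : ℕ => (x * (k:ℂ)⁻¹ + 1) / (y * (k:ℂ)⁻¹ + 1)) atTop (𝓝 1) := by
      have h := h1'.div h2' one_ne_zero
      rw [div_one] at h
      exact h
    apply hlim.congr'
    filter_upwards [eventually_ge_atTop 1] with k hk
    have hk0 : (k:ℂ) ≠ 0 := Nat.cast_ne_zero.mpr (by omega)
    have hden : y * (k:ℂ)⁻¹ + 1 ≠ 0 := by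
      have : y * (k:ℂ)⁻¹ + 1 = (y + k) * (k:ℂ)⁻¹ := by field_simp
      rw [this]
      exact mul_ne_zero (hy k) (inv_ne_zero hk0)
    rw [div_eq_div_iff hden (hy k)]
    field_simp
  have hg2 : Tendsto (fun k : ℕ => ((A' + k) * ((1:ℂ) + k)) / ((A + k) * (b + k)))
      atTop (𝓝 1) := by
    have h := (hratio A' A pA).mul (hratio 1 b pb)
    rw [mul_one] at h
    apply h.congr
    intro k
    exact div_mul_div_comm _ _ _ _
  have hg1 : Tendsto (fun k : ℕ => GammaSeq A' k * GammaSeq 1 k / (GammaSeq A k * GammaSeq b k))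
      atTop (𝓝 (Gamma A' * Gamma 1 / (Gamma A * Gamma b))) :=
    ((GammaSeq_tendsto_Gamma A').mul (GammaSeq_tendsto_Gamma 1)).div
      ((GammaSeq_tendsto_Gamma A).mul (GammaSeq_tendsto_Gamma b)) (mul_ne_zero GA Gb)
  have hg : Tendsto g atTop (𝓝 L) := by
    have h := hg1.mul hg2
    rw [mul_one] at h
    apply h.congr
    intro k
    exact div_mul_div_comm _ _ _ _
  clear_value g L
  -- main identity
  have hmain : ∀ k : ℕ, k ≠ 0 →
      poch A k * poch b k / (poch A' k * (k.factorial : ℂ)) = (k:ℂ)^(2*b - 2) * g k := by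
    intro k hk
    obtain ⟨SAne, RA⟩ := gammaSeq_key pA hk
    obtain ⟨Sbne, Rb⟩ := gammaSeq_key pb hk
    obtain ⟨SA'ne, RA'⟩ := gammaSeq_key pA' hk
    obtain ⟨S1ne, R1⟩ := gammaSeq_key p1 hk
    have hk0 : (k:ℂ) ≠ 0 := Nat.cast_ne_zero.mpr hk
    have hf : (k.factorial : ℂ) ≠ 0 := Nat.cast_ne_zero.mpr k.factorial_ne_zero
    have hp1 : poch (1:ℂ) k = (k.factorial : ℂ) := by
      rw [poch]
      simp [ascPochhammer_eval_one]
    rw [hp1, Complex.cpow_one] at R1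
    have eS1 : GammaSeq 1 k * ((1:ℂ) + k) = (k:ℂ) :=
      mul_left_cancel₀ hf (by linear_combination R1)
    have epow : (k:ℂ)^A * (k:ℂ)^b = (k:ℂ)^(2*b-2) * ((k:ℂ)^A' * (k:ℂ)) := by
      have e1 : A + b = (2*b-2) + (A' + 1) := by rw [hA, hA']; ring
      calc (k:ℂ)^A * (k:ℂ)^b = (k:ℂ)^(A+b) := (Complex.cpow_add _ _ hk0).symm
        _ = (k:ℂ)^((2*b-2) + (A'+1)) := by rw [e1]
        _ = (k:ℂ)^(2*b-2) * ((k:ℂ)^A' * (k:ℂ)) := by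
            rw [Complex.cpow_add _ _ hk0, Complex.cpow_add _ _ hk0, Complex.cpow_one]
    have gnum : GammaSeq A' k * GammaSeq 1 k * ((A' + (k:ℂ)) * (1 + (k:ℂ))) =
        GammaSeq A' k * (A' + (k:ℂ)) * (k:ℂ) := by
      linear_combination (GammaSeq A' k * (A' + (k:ℂ))) * eS1
    have hden1 : poch A' k * (k.factorial : ℂ) ≠ 0 := mul_ne_zero (poch_ne_zero pA' k) hf
    have hden2 : GammaSeq A k * GammaSeq b k * ((A + (k:ℂ)) * (b + (k:ℂ))) ≠ 0 :=
      mul_ne_zero (mul_ne_zero SAne Sbne) (mul_ne_zero (pA k) (pb k))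
    simp only [hgdef]
    rw [gnum, ← mul_div_assoc, div_eq_div_iff hden1 hden2]
    linear_combination (GammaSeq b k * (poch b k * (b + (k:ℂ)))) * RA +
      ((k:ℂ)^A * (k.factorial:ℂ)) * Rb + ((k.factorial:ℂ))^2 * epow -
      ((k:ℂ)^(2*b-2) * (k:ℂ) * (k.factorial:ℂ)) * RA'
  -- |F| in terms of g
  have habs : ∀ k : ℕ, k ≠ 0 → ‖kummerF a b n k‖ =
      ‖Cst‖ * ((k:ℝ)^(2*b.re - 2) * ‖g k‖) := by
    intro k hk
    have hkpos : (0:ℝ) < k := by positivity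
    have hF : kummerF a b n k =
        (poch A k * poch b k / (poch A' k * (k.factorial : ℂ))) * (-1:ℂ)^k * Cst := by
      rw [kummerF, hCstdef, hA, hA']
      ring
    rw [hF, hmain k hk, norm_mul, norm_mul, norm_mul, norm_pow]
    have habs1 : ‖(-1 : ℂ)‖ = 1 := by simp
    have habs2 : ‖(k:ℂ)^(2*b - 2)‖ = (k:ℝ)^(2*b.re - 2) := by
      rw [show ((k:ℕ):ℂ) = (((k:ℝ)):ℂ) by push_cast; ring,
        Complex.norm_cpow_eq_rpow_re_of_pos hkpos]
      congr 1
      simp [Complex.sub_re, Complex.mul_re]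
    rw [habs1, habs2, one_pow]
    ring
  set c : ℝ := ‖Cst‖ * ‖L‖ with hcdef
  have hcpos : 0 < c := mul_pos (norm_pos_iff.mpr hCst)
    (norm_pos_iff.mpr hLne)
  have hequiv : Asymptotics.IsEquivalent atTop
      (fun k : ℕ => ‖kummerF a b n k‖)
      (fun k : ℕ => c * (k : ℝ) ^ (2 * b.re - 2)) := by
    rw [Asymptotics.isEquivalent_iff_tendsto_one]
    · have habsg : Tendsto (fun k : ℕ => ‖g k‖) atTop (𝓝 ‖L‖) :=
        (continuous_norm.tendsto L).comp hg
      have hlim : Tendsto (fun k : ℕ => ‖Cst‖ * ‖g k‖ / c) atTop (𝓝 1) := by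
        have h := (habsg.const_mul ‖Cst‖).div_const c
        rw [show ‖Cst‖ * ‖L‖ / c = 1 from div_self hcpos.ne'] at h
        exact h
      apply hlim.congr'
      filter_upwards [eventually_ge_atTop 1] with k hk
      have hkne : k ≠ 0 := by omega
      have hkpos : (0:ℝ) < k := by positivity
      have hr : (k:ℝ)^(2*b.re - 2) ≠ 0 := (Real.rpow_pos_of_pos hkpos _).ne'
      simp only [Pi.div_apply]
      rw [habs k hkne]
      field_simp
    · filter_upwards [eventually_ge_atTop 1] with k hk
      have hkpos : (0:ℝ) < k := by positivity
      exact (mul_pos hcpos (Real.rpow_pos_of_pos hkpos _)).ne'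
  have hv : Tendsto (fun k : ℕ => c * (k:ℝ)^(2*b.re - 2)) atTop (𝓝 0) := by
    have h1' : Tendsto (fun x : ℝ => x ^ (-(2 - 2*b.re))) atTop (𝓝 0) :=
      tendsto_rpow_neg_atTop (by linarith)
    have h2' := (h1'.comp tendsto_natCast_atTop_atTop).const_mul c
    rw [mul_zero] at h2'
    convert h2' using 2 with k
    norm_num
  have habsF : Tendsto (fun k : ℕ => ‖kummerF a b n k‖) atTop (𝓝 0) :=
    hequiv.symm.tendsto_nhds hv
  refine ⟨⟨c, hcpos, hequiv⟩, ?_⟩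
  rw [tendsto_zero_iff_norm_tendsto_zero]
  simpa using habsF
end
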